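/- Let d ≥ 1 and let Q₀ ⊂ ℝ^d be a cube. There is a constant C > 0 depending only on d such that for every u ∈ L¹(Q₀;𝓗^d_∞), (1/C) ‖u‖_{BMO^d(Q₀)} ≤ ‖u‖_{BMO(Q₀)} ≤ C ‖u‖_{BMO^d(Q₀)}, where ‖u‖_{BMO(Q₀)} is the classical John–Nirenberg seminorm with respect to Lebesgue measure; consequently BMO^d(Q₀) coincides with the classical space BMO(Q₀). -/

import Mathlib

open Set MeasureTheory ENNReal NNReal Filter

noncomputable section

/-- `ℝ^d` with the Euclidean metric. -/
abbrev Euc (d : ℕ) : Type := EuclideanSpace ℝ (Fin d)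

/-- An axis-parallel cube in `ℝ^d`, given by its lower corner and (positive) side length. -/
structure Cube (d : ℕ) where
  corner : Fin d → ℝ
  side : ℝ
  side_pos : 0 < side

namespace Cube

/-- The (half-open) set of points of the cube. -/
def set {d : ℕ} (Q : Cube d) : Set (Euc d) :=
  {x : Euc d | ∀ i, Q.corner i ≤ x i ∧ x i < Q.corner i + Q.side}

/-- The dyadic lattice `𝓓(Q)` generated by `Q`: all cubes of side `l(Q)·2ⁿ` (`n : ℤ`) with
corners on the correspondingly rescaled grid anchored at the corner of `Q`; equivalently `Q`,
its dyadic ancestors, and all of their repeated dyadic subdivisions. -/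
def dyadic {d : ℕ} (Q : Cube d) : Set (Cube d) :=
  {Q' | ∃ (n : ℤ) (k : Fin d → ℤ), Q'.side = Q.side * 2 ^ n ∧
    ∀ i, Q'.corner i = Q.corner i + (k i : ℝ) * (Q.side * 2 ^ n)}

end Cube

/-- The spherical Hausdorff content `𝓗^β_∞`, with `ω_β = π^{β/2}/Γ(β/2+1)`. -/
def hausdorffContent (d : ℕ) (β : ℝ) (E : Set (Euc d)) : ℝ≥0∞ :=
  ⨅ (c : ℕ → Euc d × ℝ) (_ : E ⊆ ⋃ i, Metric.ball (c i).1 (c i).2),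
    ∑' i, ENNReal.ofReal (Real.pi ^ (β / 2) / Real.Gamma (β / 2 + 1) * (c i).2 ^ β)

/-- The dyadic Hausdorff content `𝓗^{β,Q}_∞` adapted to the cube `Q`. -/
def dyadicContent (d : ℕ) (β : ℝ) (Q : Cube d) (E : Set (Euc d)) : ℝ≥0∞ :=
  ⨅ (c : ℕ → Cube d) (_ : ∀ i, c i ∈ Q.dyadic) (_ : E ⊆ ⋃ i, (c i).set),
    ∑' i, ENNReal.ofReal ((c i).side ^ β)

/-- The Choquet integral `∫_A f dH := ∫_0^∞ H({x ∈ A : f x > t}) dt`. -/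
def choquetIntegral {X : Type*} (H : Set X → ℝ≥0∞) (A : Set X) (f : X → ℝ) : ℝ≥0∞ :=
  ∫⁻ t in Set.Ioi (0 : ℝ), H {x | x ∈ A ∧ t < f x}

/-- `f` is `H`-quasicontinuous: for every `ε > 0` there is an open set `O` with `H O < ε`
such that `f` restricted to `Oᶜ` is continuous. -/
def QuasiContinuous {X : Type*} [TopologicalSpace X] (H : Set X → ℝ≥0∞) (f : X → ℝ) : Prop :=
  ∀ ε : ℝ, 0 < ε → ∃ O : Set X, IsOpen O ∧ H O < ENNReal.ofReal ε ∧ ContinuousOn f Oᶜ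

/-- `f ∈ L¹(A; H)`: `f` is `H`-quasicontinuous and `∫_A |f| dH < ∞`. -/
def MemChoquetL1 {X : Type*} [TopologicalSpace X] (H : Set X → ℝ≥0∞) (A : Set X)
    (f : X → ℝ) : Prop :=
  QuasiContinuous H f ∧ choquetIntegral H A (fun x => |f x|) < ⊤

/-- The `BMO^β(Q₀)` seminorm: `sup_{Q ⊆ Q₀} inf_{c ∈ ℝ} l(Q)^{-β} ∫_Q |u - c| d𝓗^β_∞`. -/
def bmoSeminorm (d : ℕ) (β : ℝ) (Q₀ : Set (Euc d)) (u : Euc d → ℝ) : ℝ≥0∞ :=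
  ⨆ (Q : Cube d) (_ : Q.set ⊆ Q₀),
    ⨅ c : ℝ, choquetIntegral (hausdorffContent d β) Q.set (fun x => |u x - c|) /
      ENNReal.ofReal (Q.side ^ β)

/-- Membership in `BMO^β(Q₀)`. -/
def MemBMO (d : ℕ) (β : ℝ) (Q₀ : Set (Euc d)) (u : Euc d → ℝ) : Prop :=
  MemChoquetL1 (hausdorffContent d β) Q₀ u ∧ bmoSeminorm d β Q₀ u < ⊤


/-- The classical John–Nirenberg BMO seminorm on `Q₀` with respect to Lebesgue measure. -/
def bmoClassical (d : ℕ) (Q₀ : Set (Euc d)) (u : Euc d → ℝ) : ℝ≥0∞ :=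
  ⨆ (Q : Cube d) (_ : Q.set ⊆ Q₀),
    (volume Q.set)⁻¹ * ∫⁻ x in Q.set, ENNReal.ofReal |u x - ⨍ y in Q.set, u y|

/-- The axis-parallel affine subspace of `ℝ^d` obtained by freeing the coordinates in `S`
and fixing the remaining coordinates to the values of `b`. -/
def hyperplane (d : ℕ) (S : Finset (Fin d)) (b : Fin d → ℝ) : Set (Euc d) :=
  {x : Euc d | ∀ i ∉ S, x i = b i}

/-- The classical BMO seminorm of `u` on `Q₀ ∩ H` with respect to the `k`-dimensional
Hausdorff measure `𝓗^k`, the supremum being over the subcubes `Q.set ∩ H ⊆ Q₀ ∩ H`. -/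
def bmoClassicalOnPlane (d k : ℕ) (Q₀ : Cube d) (H : Set (Euc d)) (u : Euc d → ℝ) : ℝ≥0∞ :=
  ⨆ (Q : Cube d) (_ : Q.set ∩ H ⊆ Q₀.set),
    (Measure.hausdorffMeasure (k : ℝ) (Q.set ∩ H))⁻¹ *
      ∫⁻ x in Q.set ∩ H,
        ENNReal.ofReal |u x - ⨍ y in Q.set ∩ H, u y ∂(Measure.hausdorffMeasure (k : ℝ))|
          ∂(Measure.hausdorffMeasure (k : ℝ))

/-- The unique dyadic cube of `𝓓(Q)` of generation `n` (side `l(Q)·2^{-n}`) containing `x`. -/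
def dyadicCubeAt {d : ℕ} (Q : Cube d) (n : ℕ) (x : Euc d) : Cube d where
  corner := fun i => Q.corner i + Q.side * (2 : ℝ)⁻¹ ^ n *
    (⌊(x i - Q.corner i) / (Q.side * (2 : ℝ)⁻¹ ^ n)⌋ : ℝ)
  side := Q.side * (2 : ℝ)⁻¹ ^ n
  side_pos := by have := Q.side_pos; positivity

/-- The dyadic `β`-Hausdorff maximal function associated to `𝓗^{β,Q}_∞`. -/
def dyadicMaximal (d : ℕ) (β : ℝ) (Q : Cube d) (f : Euc d → ℝ) (x : Euc d) : ℝ≥0∞ :=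
  ⨆ (Q' : Cube d) (_ : Q' ∈ Q.dyadic) (_ : x ∈ Q'.set),
    choquetIntegral (dyadicContent d β Q) Q'.set (fun y => |f y|) / ENNReal.ofReal (Q'.side ^ β)

/-- The `BMO^{β,p}(Q₀)` seminorm. -/
def bmoSeminormP (d : ℕ) (β p : ℝ) (Q₀ : Set (Euc d)) (u : Euc d → ℝ) : ℝ≥0∞ :=
  ⨆ (Q : Cube d) (_ : Q.set ⊆ Q₀),
    ⨅ c : ℝ, (choquetIntegral (hausdorffContent d β) Q.set (fun x => |u x - c| ^ p) /
      ENNReal.ofReal (Q.side ^ β)) ^ (1 / p)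

/-- The standard normalization constant `γ(α) = π^{d/2} 2^α Γ(α/2) / Γ((d-α)/2)`. -/
def rieszConst (d : ℕ) (α : ℝ) : ℝ :=
  Real.pi ^ ((d : ℝ) / 2) * 2 ^ α * Real.Gamma (α / 2) / Real.Gamma (((d : ℝ) - α) / 2)

/-- The Riesz potential `I_α μ (x) = γ(α)⁻¹ ∫ |x - y|^{α - d} dμ(y)`. -/
def rieszPotential (d : ℕ) (α : ℝ) (μ : Measure (Euc d)) (x : Euc d) : ℝ :=
  (rieszConst d α)⁻¹ * (∫⁻ y, ENNReal.ofReal (‖x - y‖ ^ (α - (d : ℝ))) ∂μ).toReal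

/-- The Morrey norm `‖μ‖_{ℳ^γ} = sup_{x, r>0} μ(B(x,r))/r^γ`. -/
def morreyNorm (d : ℕ) (γ : ℝ) (μ : Measure (Euc d)) : ℝ≥0∞ :=
  ⨆ (x : Euc d) (r : ℝ) (_ : 0 < r), μ (Metric.ball x r) / ENNReal.ofReal (r ^ γ)

/-- The dyadic `BMO^β_*(Q₀)` seminorm, where for each subcube `Q` the dyadic Hausdorff
content adapted to that `Q` is used. -/
def bmoDyadicSeminorm (d : ℕ) (β : ℝ) (Q₀ : Set (Euc d)) (u : Euc d → ℝ) : ℝ≥0∞ :=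
  ⨆ (Q : Cube d) (_ : Q.set ⊆ Q₀),
    ⨅ c : ℝ, choquetIntegral (dyadicContent d β Q) Q.set (fun x => |u x - c|) /
      ENNReal.ofReal (Q.side ^ β)

/-- A (possibly infinite) cube in `ℝ^d`: either a finite cube, or a product of intervals
which are infinite in every coordinate direction. -/
def IsGenCube (d : ℕ) (S : Set (Euc d)) : Prop :=
  (∃ Q : Cube d, S = Q.set) ∨
  (∃ I : Fin d → Set ℝ,
      (∀ i, (∃ a, I i = Set.Ici a) ∨ (∃ b, I i = Set.Iio b) ∨ I i = Set.univ) ∧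
      S = {x : Euc d | ∀ i, x i ∈ I i})

/-- The Choquet integral of an `ℝ≥0∞`-valued function. -/
def choquetIntegralE {X : Type*} (H : Set X → ℝ≥0∞) (f : X → ℝ≥0∞) : ℝ≥0∞ :=
  ∫⁻ t in Set.Ioi (0 : ℝ), H {x | ENNReal.ofReal t < f x}


section Aux

open scoped ENNReal

variable {d : ℕ}

/-- the normalizing constant -/
def bmoW (d : ℕ) : ℝ := Real.pi ^ ((d : ℝ) / 2) / Real.Gamma ((d : ℝ) / 2 + 1)

lemma bmoW_pos (d : ℕ) : 0 < bmoW d := by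
  have h1 : 0 < Real.pi ^ ((d : ℝ) / 2) :=
    Real.rpow_pos_of_pos Real.pi_pos _
  have h2 : 0 < Real.Gamma ((d : ℝ) / 2 + 1) := by
    apply Real.Gamma_pos_of_pos; positivity
  exact div_pos h1 h2

lemma bmo_volume_ball (hd : 1 ≤ d) (x : Euc d) (r : ℝ) (hr : 0 ≤ r) :
    volume (Metric.ball x r) = ENNReal.ofReal (bmoW d * r ^ (d : ℝ)) := by
  haveI : Nonempty (Fin d) := ⟨⟨0, hd⟩⟩
  rw [EuclideanSpace.volume_ball]
  have hcard : Fintype.card (Fin d) = d := Fintype.card_fin d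
  rw [hcard]
  have hsqrt : Real.sqrt Real.pi ^ d = Real.pi ^ ((d : ℝ) / 2) := by
    rw [Real.sqrt_eq_rpow, ← Real.rpow_natCast (Real.pi ^ ((1:ℝ)/2)) d,
      ← Real.rpow_mul Real.pi_pos.le]
    ring_nf
  have hg : 0 < Real.Gamma ((d : ℝ) / 2 + 1) := by
    apply Real.Gamma_pos_of_pos; positivity
  rw [← ENNReal.ofReal_pow hr, ← ENNReal.ofReal_mul (by positivity)]
  congr 1
  rw [hsqrt, bmoW, Real.rpow_natCast]
  ring

lemma bmo_volume_le_content (hd : 1 ≤ d) (E : Set (Euc d)) :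
    volume E ≤ hausdorffContent d d E := by
  refine le_iInf₂ fun c hc => ?_
  calc volume E ≤ volume (⋃ i, Metric.ball (c i).1 (c i).2) := measure_mono hc
    _ ≤ ∑' i, volume (Metric.ball (c i).1 (c i).2) := measure_iUnion_le _
    _ ≤ ∑' i, ENNReal.ofReal (Real.pi ^ ((d:ℝ) / 2) / Real.Gamma ((d:ℝ) / 2 + 1)
          * (c i).2 ^ (d:ℝ)) := by
        refine ENNReal.tsum_le_tsum fun i => ?_
        rcases le_or_gt 0 (c i).2 with h | h
        · rw [bmo_volume_ball hd _ _ h]; exact le_refl _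
        · rw [Metric.ball_eq_empty.2 h.le, measure_empty]; exact zero_le

lemma bmo_hausdorff_le_volume (hd : 1 ≤ d) :
    ∃ A : ℝ≥0∞, A ≠ ⊤ ∧ ∀ E : Set (Euc d), μH[(d:ℝ)] E ≤ A * volume E := by
  set K : ℝ≥0 := (d : ℝ≥0) ^ ((1:ℝ)/2) with hK
  refine ⟨(K : ℝ≥0∞) ^ (d:ℝ), ENNReal.rpow_ne_top_of_nonneg (by positivity) ENNReal.coe_ne_top,
    fun E => ?_⟩
  have hanti := PiLp.antilipschitzWith_ofLp 2 (fun _ : Fin d => ℝ)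
  have hlip : LipschitzWith K ⇑(WithLp.equiv 2 (Fin d → ℝ)).symm := by
    intro a b
    have h := hanti ((WithLp.equiv 2 (Fin d → ℝ)).symm a) ((WithLp.equiv 2 (Fin d → ℝ)).symm b)
    simp only [WithLp.equiv_symm_apply, WithLp.ofLp_toLp] at h ⊢
    refine le_trans h ?_
    gcongr
    have : ((1:ℝ≥0∞)/2).toReal = (1:ℝ)/2 := by
      rw [ENNReal.toReal_div]; norm_num
    rw [hK, Fintype.card_fin, this]
  set e := (MeasurableEquiv.toLp 2 (Fin d → ℝ)).symm with he
  have himg : E = (WithLp.equiv 2 (Fin d → ℝ)).symm '' (e '' E) := by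
    rw [he, MeasurableEquiv.coe_toLp_symm, Set.image_image]
    simp
  calc μH[(d:ℝ)] E = μH[(d:ℝ)] ((WithLp.equiv 2 (Fin d → ℝ)).symm '' (e '' E)) := by
        rw [← himg]
    _ ≤ (K : ℝ≥0∞) ^ (d:ℝ) * μH[(d:ℝ)] (e '' E) :=
        hlip.hausdorffMeasure_image_le (by positivity) _
    _ = (K : ℝ≥0∞) ^ (d:ℝ) * volume E := by
        congr 1
        have hpi : (μH[(d:ℝ)] : Measure (Fin d → ℝ)) = volume := by
          have h := MeasureTheory.hausdorffMeasure_pi_real (ι := Fin d)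
          rwa [Fintype.card_fin] at h
        rw [hpi, ← (EuclideanSpace.volume_preserving_symm_measurableEquiv_toLp (Fin d)).map_eq,
          MeasurableEquiv.map_apply, Set.preimage_image_eq _ e.injective]

set_option maxHeartbeats 1000000 in
lemma bmo_content_le_hausdorff (hd : 1 ≤ d) (E : Set (Euc d)) :
    hausdorffContent d d E ≤ ENNReal.ofReal (bmoW d * 2 ^ d) * μH[(d:ℝ)] E := by
  have hdR : (0:ℝ) < (d:ℝ) := by exact_mod_cast hd
  set c2 := ENNReal.ofReal (bmoW d * 2 ^ d) with hc2
  have hc2pos : c2 ≠ 0 := by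
    rw [hc2]
    simp only [ne_eq, ENNReal.ofReal_eq_zero, not_le]
    have := bmoW_pos d
    positivity
  by_cases hμ : μH[(d:ℝ)] E = ⊤
  · rw [hμ, ENNReal.mul_top hc2pos]; exact le_top
  have main : ∀ η : ℝ, 0 < η →
      hausdorffContent d d E ≤
        c2 * (μH[(d:ℝ)] E + ENNReal.ofReal η + 2 * ENNReal.ofReal (η ^ (d:ℝ))) := by
    intro η hη
    -- extract a good cover
    obtain ⟨t, htE, htdiam, htsum⟩ : ∃ t : ℕ → Set (Euc d), (E ⊆ ⋃ n, t n) ∧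
        (∀ n, EMetric.diam (t n) ≤ 1) ∧
        (∑' n, ⨆ _ : (t n).Nonempty, EMetric.diam (t n) ^ (d:ℝ))
          < μH[(d:ℝ)] E + ENNReal.ofReal η := by
      have h1 : (⨅ (t : ℕ → Set (Euc d)) (_ : E ⊆ ⋃ n, t n) (_ : ∀ n, EMetric.diam (t n) ≤ 1),
          ∑' n, ⨆ _ : (t n).Nonempty, EMetric.diam (t n) ^ (d:ℝ)) ≤ μH[(d:ℝ)] E := by
        rw [MeasureTheory.Measure.hausdorffMeasure_apply]
        exact le_iSup₂ (f := fun (r : ℝ≥0∞) (_ : 0 < r) =>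
          ⨅ (t : ℕ → Set (Euc d)) (_ : E ⊆ ⋃ n, t n) (_ : ∀ n, EMetric.diam (t n) ≤ r),
            ∑' n, ⨆ _ : (t n).Nonempty, EMetric.diam (t n) ^ (d:ℝ)) 1 zero_lt_one
      have h2 := h1.trans_lt (ENNReal.lt_add_right hμ (ENNReal.ofReal_pos.2 hη).ne')
      simp only [iInf_lt_iff] at h2
      obtain ⟨t, ht1, ht2, ht3⟩ := h2
      exact ⟨t, ht1, ht2, ht3⟩
    classical
    haveI : Nonempty (Euc d) := ⟨0⟩
    set x : ℕ → Euc d := fun n =>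
      if h : (t n).Nonempty then h.choose else Classical.arbitrary _ with hx
    set r : ℕ → ℝ := fun n => (EMetric.diam (t n)).toReal + η * (2⁻¹:ℝ) ^ n with hr
    have hbpos : ∀ n : ℕ, 0 < η * (2⁻¹:ℝ) ^ n := fun n => by positivity
    have hdiam_fin : ∀ n, EMetric.diam (t n) ≠ ⊤ := fun n =>
      ne_top_of_le_ne_top ENNReal.one_ne_top (htdiam n)
    have hsub : ∀ n, t n ⊆ Metric.ball (x n) (r n) := by
      intro n y hy
      have hnon : (t n).Nonempty := ⟨y, hy⟩
      have hxm : x n ∈ t n := by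
        rw [hx]; simp only [dif_pos hnon]; exact hnon.choose_spec
      have hdy : dist y (x n) ≤ (EMetric.diam (t n)).toReal := by
        rw [dist_edist]
        exact ENNReal.toReal_mono (hdiam_fin n) (EMetric.edist_le_diam_of_mem hy hxm)
      rw [Metric.mem_ball]
      calc dist y (x n) ≤ (EMetric.diam (t n)).toReal := hdy
        _ < r n := by rw [hr]; exact lt_add_of_pos_right _ (hbpos n)
    have hcont : hausdorffContent d d E ≤
        ∑' n, ENNReal.ofReal (Real.pi ^ ((d:ℝ)/2) / Real.Gamma ((d:ℝ)/2 + 1) * (r n) ^ (d:ℝ)) := by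
      refine iInf₂_le (fun n => (x n, r n)) ?_
      intro y hy
      obtain ⟨n, hn⟩ := Set.mem_iUnion.1 (htE hy)
      exact Set.mem_iUnion.2 ⟨n, hsub n hn⟩
    have hterm : ∀ n : ℕ,
        ENNReal.ofReal (Real.pi ^ ((d:ℝ)/2) / Real.Gamma ((d:ℝ)/2 + 1) * (r n) ^ (d:ℝ)) ≤
        c2 * ((⨆ _ : (t n).Nonempty, EMetric.diam (t n) ^ (d:ℝ))
          + ENNReal.ofReal ((η * (2⁻¹:ℝ) ^ n) ^ (d:ℝ))) := by
      intro n
      set a : ℝ := (EMetric.diam (t n)).toReal with ha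
      set b : ℝ := η * (2⁻¹:ℝ) ^ n with hb
      have ha0 : 0 ≤ a := ENNReal.toReal_nonneg
      have hb0 : 0 < b := hbpos n
      have hreal : (a + b) ^ (d:ℝ) ≤ 2 ^ d * (a ^ (d:ℝ) + b ^ (d:ℝ)) := by
        have h1 : a + b ≤ 2 * max a b := by
          rcases le_total a b with h | h
          · calc a + b ≤ b + b := by linarith
              _ = 2 * b := by ring
              _ ≤ 2 * max a b := by gcongr; exact le_max_right _ _
          · calc a + b ≤ a + a := by linarith
              _ = 2 * a := by ring
              _ ≤ 2 * max a b := by gcongr; exact le_max_left _ _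
        have hmax0 : 0 ≤ max a b := le_trans ha0 (le_max_left _ _)
        calc (a + b) ^ (d:ℝ) ≤ (2 * max a b) ^ (d:ℝ) :=
              Real.rpow_le_rpow (by positivity) h1 hdR.le
          _ = 2 ^ (d:ℝ) * (max a b) ^ (d:ℝ) := Real.mul_rpow (by norm_num) hmax0
          _ ≤ 2 ^ (d:ℝ) * (a ^ (d:ℝ) + b ^ (d:ℝ)) := by
              gcongr
              rcases le_total a b with h | h
              · rw [max_eq_right h]
                exact le_add_of_nonneg_left (Real.rpow_nonneg ha0 _)
              · rw [max_eq_left h]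
                exact le_add_of_nonneg_right (Real.rpow_nonneg hb0.le _)
          _ = 2 ^ d * (a ^ (d:ℝ) + b ^ (d:ℝ)) := by rw [Real.rpow_natCast]
      have hW : Real.pi ^ ((d:ℝ)/2) / Real.Gamma ((d:ℝ)/2 + 1) = bmoW d := rfl
      rw [hW]
      have hW0 : 0 < bmoW d := bmoW_pos d
      calc ENNReal.ofReal (bmoW d * (r n) ^ (d:ℝ))
          ≤ ENNReal.ofReal (bmoW d * 2 ^ d * (a ^ (d:ℝ) + b ^ (d:ℝ))) := by
            refine ENNReal.ofReal_le_ofReal ?_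
            rw [mul_assoc]
            refine mul_le_mul_of_nonneg_left ?_ hW0.le
            rw [hr]
            exact hreal
        _ = c2 * (ENNReal.ofReal (a ^ (d:ℝ)) + ENNReal.ofReal (b ^ (d:ℝ))) := by
            rw [ENNReal.ofReal_mul (by positivity),
              ENNReal.ofReal_add (Real.rpow_nonneg ha0 _) (Real.rpow_nonneg hb0.le _)]
        _ ≤ c2 * ((⨆ _ : (t n).Nonempty, EMetric.diam (t n) ^ (d:ℝ))
              + ENNReal.ofReal (b ^ (d:ℝ))) := by
            gcongr
            by_cases hnon : (t n).Nonempty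
            · rw [iSup_pos hnon]
              have h1 : a ^ (d:ℝ) = (EMetric.diam (t n) ^ (d:ℝ)).toReal := by
                rw [ha, ENNReal.toReal_rpow]
              rw [h1, ENNReal.ofReal_toReal
                (ENNReal.rpow_ne_top_of_nonneg hdR.le (hdiam_fin n))]
            · have hdiam0 : EMetric.diam (t n) = 0 := by
                rw [Set.not_nonempty_iff_eq_empty] at hnon
                rw [hnon]; exact EMetric.diam_empty
              rw [ha, hdiam0]
              simp [Real.zero_rpow hdR.ne']
    -- sum the bounds
    have hgeo : (∑' n : ℕ, ENNReal.ofReal ((η * (2⁻¹:ℝ) ^ n) ^ (d:ℝ)))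
        ≤ 2 * ENNReal.ofReal (η ^ (d:ℝ)) := by
      have hterm2 : ∀ n : ℕ, ENNReal.ofReal ((η * (2⁻¹:ℝ) ^ n) ^ (d:ℝ))
          = ENNReal.ofReal (η ^ (d:ℝ)) * ENNReal.ofReal (((2⁻¹:ℝ) ^ (d:ℝ))) ^ n := by
        intro n
        rw [Real.mul_rpow hη.le (by positivity), ← ENNReal.ofReal_pow (by positivity),
          ENNReal.ofReal_mul (by positivity)]
        congr 2
        rw [← Real.rpow_natCast ((2⁻¹:ℝ)) n, ← Real.rpow_mul (by norm_num),
          ← Real.rpow_natCast ((2⁻¹:ℝ) ^ (d:ℝ)) n, ← Real.rpow_mul (by norm_num)]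
        ring_nf
      rw [tsum_congr hterm2, ENNReal.tsum_mul_left]
      rw [mul_comm (2:ℝ≥0∞) _]
      gcongr
      rw [ENNReal.tsum_geometric]
      have hhalf : ENNReal.ofReal ((2⁻¹:ℝ) ^ (d:ℝ)) ≤ 2⁻¹ := by
        have : (2⁻¹:ℝ) ^ (d:ℝ) ≤ (2⁻¹:ℝ) ^ (1:ℝ) :=
          Real.rpow_le_rpow_of_exponent_ge (by norm_num) (by norm_num)
            (by exact_mod_cast hd)
        refine le_trans (ENNReal.ofReal_le_ofReal (by simpa using this)) ?_
        rw [ENNReal.ofReal_inv_of_pos (by norm_num)]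
        simp
      calc (1 - ENNReal.ofReal ((2⁻¹:ℝ) ^ (d:ℝ)))⁻¹ ≤ (1 - 2⁻¹ : ℝ≥0∞)⁻¹ := by
            gcongr
          _ = 2 := by
            rw [ENNReal.one_sub_inv_two]
            simp
    calc hausdorffContent d d E
        ≤ ∑' n, ENNReal.ofReal
            (Real.pi ^ ((d:ℝ)/2) / Real.Gamma ((d:ℝ)/2 + 1) * (r n) ^ (d:ℝ)) := hcont
      _ ≤ ∑' n, c2 * ((⨆ _ : (t n).Nonempty, EMetric.diam (t n) ^ (d:ℝ))
            + ENNReal.ofReal ((η * (2⁻¹:ℝ) ^ n) ^ (d:ℝ))) := ENNReal.tsum_le_tsum hterm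
      _ = c2 * ((∑' n, ⨆ _ : (t n).Nonempty, EMetric.diam (t n) ^ (d:ℝ))
            + ∑' n, ENNReal.ofReal ((η * (2⁻¹:ℝ) ^ n) ^ (d:ℝ))) := by
          rw [ENNReal.tsum_mul_left, ENNReal.tsum_add]
      _ ≤ c2 * ((μH[(d:ℝ)] E + ENNReal.ofReal η) + 2 * ENNReal.ofReal (η ^ (d:ℝ))) := by
          exact mul_le_mul_right (add_le_add htsum.le hgeo) c2
      _ = c2 * (μH[(d:ℝ)] E + ENNReal.ofReal η + 2 * ENNReal.ofReal (η ^ (d:ℝ))) := by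
          ring_nf
  -- pass to the limit η → 0⁺
  have hlim : Filter.Tendsto
      (fun η : ℝ => c2 * (μH[(d:ℝ)] E + ENNReal.ofReal η + 2 * ENNReal.ofReal (η ^ (d:ℝ))))
      (nhdsWithin 0 (Set.Ioi 0)) (nhds (c2 * (μH[(d:ℝ)] E + 0 + 2 * 0))) := by
    refine ENNReal.Tendsto.const_mul ?_ (Or.inr ENNReal.ofReal_ne_top)
    refine Filter.Tendsto.add (Filter.Tendsto.add tendsto_const_nhds ?_) ?_
    · have h0 : Filter.Tendsto (fun η : ℝ => η) (nhdsWithin 0 (Set.Ioi 0)) (nhds 0) :=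
        Filter.Tendsto.mono_left Filter.tendsto_id nhdsWithin_le_nhds
      simpa [Function.comp_def] using (ENNReal.continuous_ofReal.tendsto 0).comp h0
    · refine ENNReal.Tendsto.const_mul ?_ (Or.inr (by norm_num))
      have h1 : Filter.Tendsto (fun η : ℝ => η ^ (d:ℝ)) (nhdsWithin 0 (Set.Ioi 0)) (nhds 0) := by
        have := (Real.continuousAt_rpow_const 0 (d:ℝ) (Or.inr hdR.le)).tendsto
        rw [Real.zero_rpow hdR.ne'] at this
        exact this.mono_left nhdsWithin_le_nhds
      simpa [Function.comp_def] using (ENNReal.continuous_ofReal.tendsto 0).comp h1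
  have hev : ∀ᶠ η in nhdsWithin (0:ℝ) (Set.Ioi 0),
      hausdorffContent d d E ≤
        c2 * (μH[(d:ℝ)] E + ENNReal.ofReal η + 2 * ENNReal.ofReal (η ^ (d:ℝ))) := by
    filter_upwards [self_mem_nhdsWithin] with η hη using main η hη
  have := ge_of_tendsto hlim hev
  simpa using this

lemma bmo_content_le_volume (hd : 1 ≤ d) :
    ∃ A : ℝ≥0∞, A ≠ ⊤ ∧ ∀ E : Set (Euc d), hausdorffContent d d E ≤ A * volume E := by
  obtain ⟨A, hA, hAle⟩ := bmo_hausdorff_le_volume hd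
  refine ⟨ENNReal.ofReal (bmoW d * 2 ^ d) * A, ENNReal.mul_ne_top ENNReal.ofReal_ne_top hA,
    fun E => ?_⟩
  calc hausdorffContent d d E ≤ ENNReal.ofReal (bmoW d * 2 ^ d) * μH[(d:ℝ)] E :=
        bmo_content_le_hausdorff hd E
    _ ≤ ENNReal.ofReal (bmoW d * 2 ^ d) * (A * volume E) := by gcongr; exact hAle E
    _ = ENNReal.ofReal (bmoW d * 2 ^ d) * A * volume E := by ring

lemma bmo_aemeasurable (hd : 1 ≤ d) {u : Euc d → ℝ}
    (hu : QuasiContinuous (hausdorffContent d d) u) :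
    AEMeasurable u (volume : Measure (Euc d)) := by
  -- choose open sets of small content
  have hO : ∀ n : ℕ, ∃ O : Set (Euc d), IsOpen O ∧
      hausdorffContent d d O < ENNReal.ofReal (1 / (n + 1)) ∧ ContinuousOn u Oᶜ := by
    intro n
    exact hu (1 / (n + 1)) (by positivity)
  choose O hOopen hOsmall hOcont using hO
  set N : Set (Euc d) := ⋂ n, O n with hN
  have hNmeas : MeasurableSet N :=
    MeasurableSet.iInter fun n => (hOopen n).measurableSet
  have hNnull : volume N = 0 := by
    have hle : ∀ n : ℕ, volume N ≤ ENNReal.ofReal (1 / (n + 1)) := fun n =>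
      le_trans (le_trans (measure_mono (Set.iInter_subset O n))
        (bmo_volume_le_content hd _)) (hOsmall n).le
    refine le_antisymm ?_ zero_le
    refine ge_of_tendsto' (f := fun n : ℕ => ENNReal.ofReal (1 / (n + 1))) (x := Filter.atTop) ?_ hle
    rw [show (0 : ℝ≥0∞) = ENNReal.ofReal 0 by simp]
    refine (ENNReal.continuous_ofReal.tendsto 0).comp ?_
    exact tendsto_one_div_add_atTop_nhds_zero_nat
  -- the measurable modification
  classical
  set g : Euc d → ℝ := fun x => if x ∈ N then 0 else u x with hg
  have hgmeas : Measurable g := by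
    refine measurable_of_isOpen fun V hV => ?_
    have hpre : ∀ n : ℕ, MeasurableSet (u ⁻¹' V ∩ (O n)ᶜ) := by
      intro n
      obtain ⟨W, hWopen, hW⟩ := (continuousOn_iff'.1 (hOcont n)) V hV
      rw [hW]
      exact hWopen.measurableSet.inter (hOopen n).measurableSet.compl
    have hsplit : g ⁻¹' V =
        (if (0:ℝ) ∈ V then N else ∅) ∪ (⋃ n, u ⁻¹' V ∩ (O n)ᶜ) := by
      ext x
      by_cases hx : x ∈ N
      · have hx' : ∀ n, x ∈ O n := by simpa [hN, Set.mem_iInter] using hx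
        by_cases h0 : (0:ℝ) ∈ V <;> simp [hg, hx, h0, hx']
      · obtain ⟨n, hn⟩ : ∃ n, x ∉ O n := by simpa [hN, Set.mem_iInter] using hx
        have hgx : g x = u x := if_neg hx
        simp only [Set.mem_preimage, hgx, Set.mem_union, Set.mem_iUnion,
          Set.mem_inter_iff, Set.mem_compl_iff]
        constructor
        · intro hu'
          exact Or.inr ⟨n, hu', hn⟩
        · rintro (h | ⟨m, hm, _⟩)
          · exfalso
            split at h
            · exact hx h
            · exact h
          · exact hm
    rw [hsplit]
    refine MeasurableSet.union ?_ (MeasurableSet.iUnion hpre)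
    split <;> simp [hNmeas]
  refine ⟨g, hgmeas, ?_⟩
  refine measure_mono_null ?_ hNnull
  intro x hx
  by_contra hxN
  exact hx (by simp [hg, hxN])

lemma bmo_cube_set_eq (Q : Cube d) :
    Q.set = ((MeasurableEquiv.toLp 2 (Fin d → ℝ)).symm) ⁻¹'
      (Set.pi Set.univ fun i => Set.Ico (Q.corner i) (Q.corner i + Q.side)) := by
  ext x
  simp [Cube.set, Set.mem_pi, MeasurableEquiv.coe_toLp_symm, and_comm]

lemma bmo_cube_measurableSet (Q : Cube d) : MeasurableSet Q.set := by
  rw [bmo_cube_set_eq]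
  exact ((MeasurableEquiv.toLp 2 (Fin d → ℝ)).symm).measurable
    (MeasurableSet.univ_pi fun i => measurableSet_Ico)

lemma bmo_cube_volume (Q : Cube d) :
    volume Q.set = ENNReal.ofReal (Q.side ^ (d : ℝ)) := by
  rw [bmo_cube_set_eq,
    (EuclideanSpace.volume_preserving_symm_measurableEquiv_toLp (Fin d)).measure_preimage
      (MeasurableSet.univ_pi fun i => measurableSet_Ico).nullMeasurableSet]
  rw [volume_pi_pi]
  simp only [Real.volume_Ico, add_sub_cancel_left]
  rw [Finset.prod_const, Finset.card_univ, Fintype.card_fin,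
    ← ENNReal.ofReal_pow Q.side_pos.le, Real.rpow_natCast]

lemma bmo_choquet_vol_eq {A : Set (Euc d)} (hA : MeasurableSet A) {u g : Euc d → ℝ}
    (hg : Measurable g) (hug : u =ᵐ[volume] g) (c : ℝ) :
    choquetIntegral (fun S => volume S) A (fun x => |u x - c|)
      = ∫⁻ x in A, ENNReal.ofReal |u x - c| := by
  have hug' : ∀ᵐ x ∂(volume.restrict A), u x = g x := ae_restrict_of_ae hug
  have h1 : (∫⁻ x in A, ENNReal.ofReal |u x - c|)
      = ∫⁻ x in A, ENNReal.ofReal |g x - c| := by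
    refine lintegral_congr_ae ?_
    filter_upwards [hug'] with x hx
    rw [hx]
  rw [h1]
  have h2 := lintegral_eq_lintegral_meas_lt (volume.restrict A)
    (f := fun x => |g x - c|) (Filter.Eventually.of_forall fun x => abs_nonneg _)
    ((hg.sub_const c).abs.aemeasurable)
  rw [h2]
  unfold choquetIntegral
  refine lintegral_congr fun t => ?_
  rw [Measure.restrict_apply' hA]
  refine measure_congr ?_
  have : ∀ᵐ x ∂(volume : Measure (Euc d)), u x = g x := hug
  rw [Filter.eventuallyEq_set]
  filter_upwards [this] with x hx
  simp only [Set.mem_inter_iff, Set.mem_setOf_eq, hx]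
  tauto

set_option maxHeartbeats 1000000 in
lemma bmo_classical_term_le {Q : Cube d} {u g : Euc d → ℝ}
    (hg : Measurable g) (hug : u =ᵐ[volume] g) (c : ℝ)
    (hfin : (∫⁻ x in Q.set, ENNReal.ofReal |u x - c|) ≠ ⊤) :
    (∫⁻ x in Q.set, ENNReal.ofReal |u x - ⨍ y in Q.set, u y|)
      ≤ 2 * ∫⁻ x in Q.set, ENNReal.ofReal |u x - c| := by
  have hug' : ∀ᵐ x ∂(volume.restrict Q.set), u x = g x := ae_restrict_of_ae hug
  have hV0 : volume Q.set ≠ 0 := by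
    rw [bmo_cube_volume]
    simp only [ne_eq, ENNReal.ofReal_eq_zero, not_le]
    exact Real.rpow_pos_of_pos Q.side_pos _
  have hVt : volume Q.set ≠ ⊤ := by
    rw [bmo_cube_volume]; exact ENNReal.ofReal_ne_top
  set t : ℝ := (volume Q.set).toReal with htdef
  have ht : 0 < t := ENNReal.toReal_pos hV0 hVt
  set I : ℝ≥0∞ := ∫⁻ x in Q.set, ENNReal.ofReal |u x - c| with hI
  have heqg : I = ∫⁻ x in Q.set, ENNReal.ofReal |g x - c| := by
    refine lintegral_congr_ae ?_
    filter_upwards [hug'] with x hx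
    rw [hx]
  -- integrability
  have hint : IntegrableOn (fun x => g x - c) Q.set := by
    refine ⟨(hg.sub_const c).aestronglyMeasurable, ?_⟩
    rw [hasFiniteIntegral_iff_norm]
    simp only [Real.norm_eq_abs]
    rw [show (∫⁻ x in Q.set, ENNReal.ofReal |g x - c|) = I from heqg.symm]
    exact hfin.lt_top
  have hgint : IntegrableOn g Q.set := by
    have h2 : IntegrableOn (fun _ : Euc d => c) Q.set :=
      integrableOn_const hVt
    have h3 := hint.add h2
    have h4 : ((fun x => g x - c) + fun _ : Euc d => c) = g := by
      funext x; simp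
    rwa [h4] at h3
  set m : ℝ := ⨍ y in Q.set, u y with hm
  have hmg : m = ⨍ y in Q.set, g y := average_congr hug'
  have hmc : m - c = t⁻¹ * ∫ x in Q.set, (g x - c) := by
    have h2 : IntegrableOn (fun _ : Euc d => c) Q.set :=
      integrableOn_const hVt
    have hsub : ∫ x in Q.set, (g x - c) = (∫ x in Q.set, g x) - t * c := by
      rw [integral_sub hgint h2, setIntegral_const, smul_eq_mul, htdef, measureReal_def]
    rw [hmg, setAverage_eq, hsub, smul_eq_mul, measureReal_def, ← htdef]
    field_simp
  have habs : |m - c| ≤ t⁻¹ * ∫ x in Q.set, |g x - c| := by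
    rw [hmc, abs_mul, abs_of_nonneg (inv_nonneg.2 ht.le)]
    refine mul_le_mul_of_nonneg_left ?_ (inv_nonneg.2 ht.le)
    have := norm_integral_le_integral_norm (μ := volume.restrict Q.set)
      (f := fun x => g x - c)
    simpa [Real.norm_eq_abs] using this
  have hIabs : ENNReal.ofReal (∫ x in Q.set, |g x - c|) = I := by
    rw [heqg]
    exact ofReal_integral_eq_lintegral_ofReal hint.abs
      (Filter.Eventually.of_forall fun x => abs_nonneg _)
  have key : ENNReal.ofReal |m - c| * volume Q.set ≤ I := by
    calc ENNReal.ofReal |m - c| * volume Q.set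
        ≤ ENNReal.ofReal (t⁻¹ * ∫ x in Q.set, |g x - c|) * volume Q.set := by
          gcongr
      _ = (ENNReal.ofReal t)⁻¹ * I * volume Q.set := by
          rw [ENNReal.ofReal_mul (inv_nonneg.2 ht.le), hIabs,
            ENNReal.ofReal_inv_of_pos ht]
      _ = ((volume Q.set)⁻¹ * volume Q.set) * I := by
          rw [htdef, ENNReal.ofReal_toReal hVt]; ring
      _ = I := by rw [ENNReal.inv_mul_cancel hV0 hVt, one_mul]
  calc (∫⁻ x in Q.set, ENNReal.ofReal |u x - m|)
      = ∫⁻ x in Q.set, ENNReal.ofReal |g x - m| := by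
        refine lintegral_congr_ae ?_
        filter_upwards [hug'] with x hx
        rw [hx]
    _ ≤ ∫⁻ x in Q.set, (ENNReal.ofReal |g x - c| + ENNReal.ofReal |m - c|) := by
        refine lintegral_mono fun x => ?_
        rw [← ENNReal.ofReal_add (abs_nonneg _) (abs_nonneg _)]
        refine ENNReal.ofReal_le_ofReal ?_
        calc |g x - m| = |(g x - c) - (m - c)| := by ring_nf
          _ ≤ |g x - c| + |m - c| := abs_sub _ _
    _ = (∫⁻ x in Q.set, ENNReal.ofReal |g x - c|) + ENNReal.ofReal |m - c| * volume Q.set := by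
        rw [lintegral_add_right _ measurable_const, setLIntegral_const]
    _ ≤ I + I := by
        rw [← heqg]
        exact add_le_add le_rfl key
    _ = 2 * I := (two_mul I).symm

end Aux

theorem bmo_top_dimension_eq_classical (d : ℕ) (hd : 1 ≤ d) (Q₀ : Cube d) :
    ∃ C : ℝ, 0 < C ∧
      ∀ u : Euc d → ℝ, MemChoquetL1 (hausdorffContent d (d : ℝ)) Q₀.set u →
        ENNReal.ofReal (1 / C) * bmoSeminorm d (d : ℝ) Q₀.set u ≤ bmoClassical d Q₀.set u ∧
        bmoClassical d Q₀.set u ≤ ENNReal.ofReal C * bmoSeminorm d (d : ℝ) Q₀.set u := by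
  obtain ⟨A, hAtop, hA⟩ := bmo_content_le_volume hd
  set C : ℝ := max (A.toReal + 1) 2 with hC
  have hCpos : 0 < C := lt_of_lt_of_le (by norm_num) (le_max_right _ _)
  have hCA : A ≤ ENNReal.ofReal C := by
    calc A = ENNReal.ofReal A.toReal := (ENNReal.ofReal_toReal hAtop).symm
      _ ≤ ENNReal.ofReal C := by
          refine ENNReal.ofReal_le_ofReal (le_trans ?_ (le_max_left _ _))
          linarith
  have hC2 : (2:ℝ≥0∞) ≤ ENNReal.ofReal C := by
    rw [show ((2:ℝ≥0∞)) = ENNReal.ofReal 2 by norm_num]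
    exact ENNReal.ofReal_le_ofReal (le_max_right _ _)
  refine ⟨C, hCpos, fun u hu => ?_⟩
  obtain ⟨g, hgmeas, hug⟩ := bmo_aemeasurable hd hu.1
  -- basic facts per cube
  have hVeq : ∀ Q : Cube d, volume Q.set = ENNReal.ofReal (Q.side ^ (d:ℝ)) := bmo_cube_volume
  have hV0 : ∀ Q : Cube d, volume Q.set ≠ 0 := fun Q => by
    rw [hVeq Q]
    simp only [ne_eq, ENNReal.ofReal_eq_zero, not_le]
    exact Real.rpow_pos_of_pos Q.side_pos _
  have hVtop : ∀ Q : Cube d, volume Q.set ≠ ⊤ := fun Q => by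
    rw [hVeq Q]; exact ENNReal.ofReal_ne_top
  have hchv : ∀ (Q : Cube d) (c : ℝ),
      choquetIntegral (fun S => volume S) Q.set (fun x => |u x - c|)
        = ∫⁻ x in Q.set, ENNReal.ofReal |u x - c| :=
    fun Q c => bmo_choquet_vol_eq (bmo_cube_measurableSet Q) hgmeas hug c
  have hmono : ∀ (Q : Cube d) (c : ℝ),
      (∫⁻ x in Q.set, ENNReal.ofReal |u x - c|)
        ≤ choquetIntegral (hausdorffContent d d) Q.set (fun x => |u x - c|) := by
    intro Q c
    rw [← hchv Q c]
    exact lintegral_mono fun t => bmo_volume_le_content hd _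
  have hup : ∀ (Q : Cube d) (c : ℝ),
      choquetIntegral (hausdorffContent d d) Q.set (fun x => |u x - c|)
        ≤ A * ∫⁻ x in Q.set, ENNReal.ofReal |u x - c| := by
    intro Q c
    rw [← hchv Q c]
    unfold choquetIntegral
    calc (∫⁻ t in Set.Ioi (0:ℝ), hausdorffContent d d {x | x ∈ Q.set ∧ t < |u x - c|})
        ≤ ∫⁻ t in Set.Ioi (0:ℝ), A * volume {x | x ∈ Q.set ∧ t < |u x - c|} :=
          lintegral_mono fun t => hA _
      _ = A * ∫⁻ t in Set.Ioi (0:ℝ), volume {x | x ∈ Q.set ∧ t < |u x - c|} :=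
          lintegral_const_mul' _ _ hAtop
  constructor
  · -- bmoSeminorm ≤ C * bmoClassical, reformulated
    have hsem : bmoSeminorm d (d : ℝ) Q₀.set u
        ≤ ENNReal.ofReal C * bmoClassical d Q₀.set u := by
      unfold bmoSeminorm
      refine iSup₂_le fun Q hQ => ?_
      refine le_trans (iInf_le _ (⨍ y in Q.set, u y)) ?_
      have h2 := hup Q (⨍ y in Q.set, u y)
      calc choquetIntegral (hausdorffContent d (d:ℝ)) Q.set
              (fun x => |u x - ⨍ y in Q.set, u y|) / ENNReal.ofReal (Q.side ^ (d:ℝ))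
          ≤ (A * ∫⁻ x in Q.set, ENNReal.ofReal |u x - ⨍ y in Q.set, u y|)
              / ENNReal.ofReal (Q.side ^ (d:ℝ)) := by gcongr
        _ = A * ((volume Q.set)⁻¹ *
              ∫⁻ x in Q.set, ENNReal.ofReal |u x - ⨍ y in Q.set, u y|) := by
            rw [← hVeq Q, div_eq_mul_inv]; ring
        _ ≤ ENNReal.ofReal C * ((volume Q.set)⁻¹ *
              ∫⁻ x in Q.set, ENNReal.ofReal |u x - ⨍ y in Q.set, u y|) :=
            mul_le_mul_left hCA _
        _ ≤ ENNReal.ofReal C * bmoClassical d Q₀.set u := by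
            refine mul_le_mul_right ?_ _
            unfold bmoClassical
            exact le_iSup₂ (f := fun (Q : Cube d) (_ : Q.set ⊆ Q₀.set) =>
              (volume Q.set)⁻¹ *
                ∫⁻ x in Q.set, ENNReal.ofReal |u x - ⨍ y in Q.set, u y|) Q hQ
    calc ENNReal.ofReal (1 / C) * bmoSeminorm d (d : ℝ) Q₀.set u
        ≤ ENNReal.ofReal (1 / C) * (ENNReal.ofReal C * bmoClassical d Q₀.set u) :=
          mul_le_mul_right hsem _
      _ = (ENNReal.ofReal (1 / C) * ENNReal.ofReal C) * bmoClassical d Q₀.set u :=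
          (mul_assoc _ _ _).symm
      _ = bmoClassical d Q₀.set u := by
          rw [← ENNReal.ofReal_mul (by positivity), one_div, inv_mul_cancel₀ hCpos.ne',
            ENNReal.ofReal_one, one_mul]
  · -- bmoClassical ≤ C * bmoSeminorm
    unfold bmoClassical
    refine iSup₂_le fun Q hQ => ?_
    set T : ℝ≥0∞ := (volume Q.set)⁻¹ *
      ∫⁻ x in Q.set, ENNReal.ofReal |u x - ⨍ y in Q.set, u y| with hT
    have claim : ∀ c : ℝ, T ≤ 2 * (choquetIntegral (hausdorffContent d (d:ℝ)) Q.set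
        (fun x => |u x - c|) / ENNReal.ofReal (Q.side ^ (d:ℝ))) := by
      intro c
      by_cases hc : choquetIntegral (hausdorffContent d (d:ℝ)) Q.set
          (fun x => |u x - c|) = ⊤
      · rw [hc, ← hVeq Q, ENNReal.top_div_of_ne_top (hVtop Q), ENNReal.mul_top (by norm_num)]
        exact le_top
      · have hfin : (∫⁻ x in Q.set, ENNReal.ofReal |u x - c|) ≠ ⊤ :=
          ne_top_of_le_ne_top hc (hmono Q c)
        have hterm := bmo_classical_term_le hgmeas hug c hfin
        calc T ≤ (volume Q.set)⁻¹ * (2 * ∫⁻ x in Q.set, ENNReal.ofReal |u x - c|) := by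
              rw [hT]; exact mul_le_mul_right hterm _
          _ ≤ (volume Q.set)⁻¹ * (2 * choquetIntegral (hausdorffContent d (d:ℝ)) Q.set
                (fun x => |u x - c|)) := by
              exact mul_le_mul_right (mul_le_mul_right (hmono Q c) _) _
          _ = 2 * (choquetIntegral (hausdorffContent d (d:ℝ)) Q.set
                (fun x => |u x - c|) / ENNReal.ofReal (Q.side ^ (d:ℝ))) := by
              rw [← hVeq Q, div_eq_mul_inv]; ring
    have hdiv : T ≤ 2 * ⨅ c : ℝ, choquetIntegral (hausdorffContent d (d:ℝ)) Q.set
        (fun x => |u x - c|) / ENNReal.ofReal (Q.side ^ (d:ℝ)) := by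
      have h1 : T / 2 ≤ ⨅ c : ℝ, choquetIntegral (hausdorffContent d (d:ℝ)) Q.set
          (fun x => |u x - c|) / ENNReal.ofReal (Q.side ^ (d:ℝ)) := by
        refine le_iInf fun c => ?_
        rw [ENNReal.div_le_iff_le_mul (Or.inl two_ne_zero) (Or.inl ENNReal.ofNat_ne_top)]
        exact (claim c).trans_eq (mul_comm _ _)
      have h2 := (ENNReal.div_le_iff_le_mul (Or.inl two_ne_zero)
        (Or.inl ENNReal.ofNat_ne_top)).1 h1
      exact h2.trans_eq (mul_comm _ _)
    refine hdiv.trans ?_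
    calc 2 * (⨅ c : ℝ, choquetIntegral (hausdorffContent d (d:ℝ)) Q.set
          (fun x => |u x - c|) / ENNReal.ofReal (Q.side ^ (d:ℝ)))
        ≤ 2 * bmoSeminorm d (d : ℝ) Q₀.set u := by
          refine mul_le_mul_right ?_ _
          unfold bmoSeminorm
          exact le_iSup₂ (f := fun (Q : Cube d) (_ : Q.set ⊆ Q₀.set) =>
            ⨅ c : ℝ, choquetIntegral (hausdorffContent d (d:ℝ)) Q.set
              (fun x => |u x - c|) / ENNReal.ofReal (Q.side ^ (d:ℝ))) Q hQ
      _ ≤ ENNReal.ofReal C * bmoSeminorm d (d : ℝ) Q₀.set u := mul_le_mul_left hC2 _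

end
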